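/- arXiv:1307.6986 — 6 statements merged into one kernel-verified Lean document; each statement's English description precedes it below -/
import Mathlib

section
/- Let |1⟩,|2⟩,|3⟩ be the standard orthonormal basis of ℂ³ and |ψ⟩ = (|1⟩+|2⟩+|3⟩)/√3. Define the 3-outcome POVM A = (A_1, A_2, A_3) with A_i = (1/2)(1 − |i⟩⟨i|), and the 2-outcome POVM B = (B_1, B_2) with B_1 = (1/2)|ψ⟩⟨ψ| and B_2 = 1 − B_1. Then A and B are coexistent but not jointly measurable. -/
open Matrix Finset
open scoped ComplexOrder

/-- An effect on `ℂ^d`: a matrix `E` with `0 ≤ E ≤ 1`, i.e. both `E` and `1 - E`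
are positive semidefinite. -/
def IsEffect {d : ℕ} (E : Matrix (Fin d) (Fin d) ℂ) : Prop :=
  E.PosSemidef ∧ (1 - E).PosSemidef

/-- An `n`-outcome POVM: a tuple of effects summing to the identity. -/
def IsPOVM {d n : ℕ} (A : Fin n → Matrix (Fin d) (Fin d) ℂ) : Prop :=
  (∀ k, IsEffect (A k)) ∧ ∑ k, A k = 1

/-- Two finite POVMs are coexistent if their ranges (sums of effects over arbitrary
outcome subsets) are contained in the range of a single POVM `M`. -/
def Coexistent {d n m : ℕ} (A : Fin n → Matrix (Fin d) (Fin d) ℂ)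
    (B : Fin m → Matrix (Fin d) (Fin d) ℂ) : Prop :=
  ∃ (N : ℕ) (M : Fin N → Matrix (Fin d) (Fin d) ℂ), IsPOVM M ∧
    (∀ X : Finset (Fin n), ∃ Z : Finset (Fin N), ∑ k ∈ X, A k = ∑ l ∈ Z, M l) ∧
    (∀ Y : Finset (Fin m), ∃ Z : Finset (Fin N), ∑ j ∈ Y, B j = ∑ l ∈ Z, M l)

/-- Two finite POVMs are jointly measurable if they are the margins of a single
POVM `J` indexed by pairs of outcomes. -/
def JointlyMeasurable {d n m : ℕ} (A : Fin n → Matrix (Fin d) (Fin d) ℂ)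
    (B : Fin m → Matrix (Fin d) (Fin d) ℂ) : Prop :=
  ∃ J : Fin n → Fin m → Matrix (Fin d) (Fin d) ℂ,
    (∀ k j, (J k j).PosSemidef) ∧
    (∀ k, ∑ j, J k j = A k) ∧
    (∀ j, ∑ k, J k j = B j)

/-- The unit vector `|ψ⟩ = (|1⟩ + |2⟩ + |3⟩)/√3` in `ℂ³`. -/
noncomputable def ψ : Fin 3 → ℂ := fun _ => 1 / (Real.sqrt 3 : ℂ)

/-- The effects `A_i = (1/2)(1 - |i⟩⟨i|)` on `ℂ³`. -/
noncomputable def Aeff (i : Fin 3) : Matrix (Fin 3) (Fin 3) ℂ :=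
  (1 / 2 : ℂ) • (1 - Matrix.single i i 1)

/-- The effect `B_1 = (1/2)|ψ⟩⟨ψ|` on `ℂ³`. -/
noncomputable def Beff : Matrix (Fin 3) (Fin 3) ℂ :=
  (1 / 2 : ℂ) • Matrix.vecMulVec ψ (star ψ)

/-! ### Auxiliary lemmas on positive semidefinite complex matrices -/

lemma aux_diag_nonneg {d : ℕ} {M : Matrix (Fin d) (Fin d) ℂ} (hM : M.PosSemidef) (i : Fin d) :
    0 ≤ M i i := by
  have := hM.dotProduct_mulVec_nonneg (Pi.single i 1)
  simpa [mulVec_single, dotProduct, Pi.single_apply, apply_ite] using this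

lemma aux_row_eq_zero {d : ℕ} {M : Matrix (Fin d) (Fin d) ℂ} (hM : M.PosSemidef) (i : Fin d)
    (h : M i i = 0) : ∀ j, M i j = 0 ∧ M j i = 0 := by
  have hv := (hM.dotProduct_mulVec_zero_iff (Pi.single i 1)).mp
    (by simpa [mulVec_single, dotProduct, Pi.single_apply] using h)
  intro j
  have hji : M j i = 0 := by simpa [mulVec_single] using congrFun hv j
  refine ⟨?_, hji⟩
  have := congrFun (congrFun hM.1 i) j
  rw [conjTranspose_apply, hji, star_zero] at this
  exact this.symm

/-- `z = (z.re : ℂ)` for `0 ≤ z`. -/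
lemma aux_eq_re {z : ℂ} (h : 0 ≤ z) : z = (z.re : ℂ) := by
  obtain ⟨_, him⟩ := Complex.nonneg_iff.mp h
  exact Complex.ext (by simp) (by simp [← him])

/-! ### The five-outcome joint refinement -/

noncomputable def dMat (k : Fin 3) : Matrix (Fin 3) (Fin 3) ℂ :=
  Matrix.of (fun i j => if i = k ∧ j = k then (1/2 : ℂ) else 0)
noncomputable def BM : Matrix (Fin 3) (Fin 3) ℂ := Matrix.of (fun _ _ => (1/6 : ℂ))
noncomputable def CM : Matrix (Fin 3) (Fin 3) ℂ :=
  Matrix.of (fun i j => if i = j then (1/3 : ℂ) else -(1/6 : ℂ))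
noncomputable def MM : Fin 5 → Matrix (Fin 3) (Fin 3) ℂ := ![dMat 0, dMat 1, dMat 2, BM, CM]

lemma MMe0 : MM 0 = dMat 0 := rfl
lemma MMe1 : MM 1 = dMat 1 := rfl
lemma MMe2 : MM 2 = dMat 2 := rfl
lemma MMe3 : MM 3 = BM := rfl
lemma MMe4 : MM 4 = CM := rfl

lemma hBeffBM : Beff = BM := by
  have h3 : ((Real.sqrt 3 : ℝ) : ℂ) * ((Real.sqrt 3 : ℝ) : ℂ) = 3 := by
    rw [← Complex.ofReal_mul, Real.mul_self_sqrt (by norm_num)]; norm_num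
  ext i j
  simp [Beff, vecMulVec, ψ, BM]
  field_simp
  rw [sq, h3]; norm_num

lemma psd_dMat (k : Fin 3) : (dMat k).PosSemidef := by
  refine Matrix.PosSemidef.of_dotProduct_mulVec_nonneg ?_ ?_
  · ext i j
    fin_cases k <;> fin_cases i <;> fin_cases j <;> simp [dMat]
  · intro x
    have key : star x ⬝ᵥ dMat k *ᵥ x = (1/2 : ℂ) * (star (x k) * x k) := by
      fin_cases k <;>
        · simp [dotProduct, Matrix.mulVec, dMat, Fin.sum_univ_three]
          ring
    rw [key]
    exact mul_nonneg (by norm_num [Complex.le_def]) (star_mul_self_nonneg _)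

lemma psd_BM : BM.PosSemidef := by
  refine Matrix.PosSemidef.of_dotProduct_mulVec_nonneg ?_ ?_
  · ext i j; simp [BM]
  · intro x
    have key : star x ⬝ᵥ BM *ᵥ x =
        (1/6 : ℂ) * ((star (x 0) + star (x 1) + star (x 2)) * (x 0 + x 1 + x 2)) := by
      simp [dotProduct, Matrix.mulVec, BM, Fin.sum_univ_three]
      ring
    rw [key]
    have h := star_mul_self_nonneg (x 0 + x 1 + x 2)
    rw [star_add, star_add] at h
    exact mul_nonneg (by norm_num [Complex.le_def]) h

lemma psd_CM : CM.PosSemidef := by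
  refine Matrix.PosSemidef.of_dotProduct_mulVec_nonneg ?_ ?_
  · ext i j; fin_cases i <;> fin_cases j <;> simp [CM, Fin.ext_iff]
  · intro x
    have key : star x ⬝ᵥ CM *ᵥ x =
        (1/6 : ℂ) * ((star (x 0) - star (x 1)) * (x 0 - x 1)
          + (star (x 0) - star (x 2)) * (x 0 - x 2)
          + (star (x 1) - star (x 2)) * (x 1 - x 2)) := by
      simp [dotProduct, Matrix.mulVec, CM, Fin.sum_univ_three]
      ring
    rw [key]
    have h01 := star_mul_self_nonneg (x 0 - x 1)
    have h02 := star_mul_self_nonneg (x 0 - x 2)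
    have h12 := star_mul_self_nonneg (x 1 - x 2)
    rw [star_sub] at h01 h02 h12
    exact mul_nonneg (by norm_num [Complex.le_def])
      (add_nonneg (add_nonneg h01 h02) h12)

lemma isPOVM_MM : IsPOVM MM := by
  have hsum : dMat 0 + dMat 1 + dMat 2 = (1/2 : ℂ) • 1 := by
    ext i j
    fin_cases i <;> fin_cases j <;>
      norm_num +decide [dMat, Matrix.one_apply]
  constructor
  · intro k
    have base : ∀ l : Fin 5, (MM l).PosSemidef := by
      intro l
      fin_cases l
      exacts [psd_dMat 0, psd_dMat 1, psd_dMat 2, psd_BM, psd_CM]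
    refine ⟨base k, ?_⟩
    fin_cases k
    · show (1 - MM 0).PosSemidef
      have : (1 : Matrix (Fin 3) (Fin 3) ℂ) - MM 0
          = dMat 0 + ((dMat 1 + dMat 1) + (dMat 2 + dMat 2)) := by
        ext i j
        fin_cases i <;> fin_cases j <;>
          norm_num +decide [MM, dMat, Matrix.one_apply]
      rw [this]
      exact (psd_dMat 0).add (((psd_dMat 1).add (psd_dMat 1)).add ((psd_dMat 2).add (psd_dMat 2)))
    · show (1 - MM 1).PosSemidef
      have : (1 : Matrix (Fin 3) (Fin 3) ℂ) - MM 1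
          = dMat 1 + ((dMat 0 + dMat 0) + (dMat 2 + dMat 2)) := by
        ext i j
        fin_cases i <;> fin_cases j <;>
          norm_num +decide [MM, dMat, Matrix.one_apply]
      rw [this]
      exact (psd_dMat 1).add (((psd_dMat 0).add (psd_dMat 0)).add ((psd_dMat 2).add (psd_dMat 2)))
    · show (1 - MM 2).PosSemidef
      have : (1 : Matrix (Fin 3) (Fin 3) ℂ) - MM 2
          = dMat 2 + ((dMat 0 + dMat 0) + (dMat 1 + dMat 1)) := by
        ext i j
        fin_cases i <;> fin_cases j <;>
          norm_num +decide [MMe2, dMat, Matrix.one_apply]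
      rw [this]
      exact (psd_dMat 2).add (((psd_dMat 0).add (psd_dMat 0)).add ((psd_dMat 1).add (psd_dMat 1)))
    · show (1 - MM 3).PosSemidef
      have : (1 : Matrix (Fin 3) (Fin 3) ℂ) - MM 3
          = CM + (dMat 0 + dMat 1 + dMat 2) := by
        ext i j
        fin_cases i <;> fin_cases j <;>
          norm_num +decide [MMe0, MMe1, MMe2, MMe3, MMe4, dMat, BM, CM, Matrix.one_apply]
      rw [this]
      exact psd_CM.add (((psd_dMat 0).add (psd_dMat 1)).add (psd_dMat 2))
    · show (1 - MM 4).PosSemidef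
      have : (1 : Matrix (Fin 3) (Fin 3) ℂ) - MM 4
          = BM + (dMat 0 + dMat 1 + dMat 2) := by
        ext i j
        fin_cases i <;> fin_cases j <;>
          norm_num +decide [MMe0, MMe1, MMe2, MMe3, MMe4, dMat, BM, CM, Matrix.one_apply]
      rw [this]
      exact psd_BM.add (((psd_dMat 0).add (psd_dMat 1)).add (psd_dMat 2))
  · rw [Fin.sum_univ_five]
    ext i j
    fin_cases i <;> fin_cases j <;>
      norm_num +decide [MMe0, MMe1, MMe2, MMe3, MMe4, dMat, BM, CM, Matrix.one_apply]

set_option maxHeartbeats 2000000 in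
lemma coex_part : Coexistent Aeff ![Beff, 1 - Beff] := by
  refine ⟨5, MM, isPOVM_MM, ?_, ?_⟩
  · intro X
    by_cases h0 : (0 : Fin 3) ∈ X <;> by_cases h1 : (1 : Fin 3) ∈ X <;>
      by_cases h2 : (2 : Fin 3) ∈ X
    · have hX : X = {0, 1, 2} := by ext a; fin_cases a <;> simp [h0, h1, h2]
      refine ⟨{0, 1, 2, 3, 4}, ?_⟩
      rw [hX, Finset.sum_insert (by decide), Finset.sum_insert (by decide),
        Finset.sum_singleton, Finset.sum_insert (by decide), Finset.sum_insert (by decide),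
        Finset.sum_insert (by decide), Finset.sum_insert (by decide), Finset.sum_singleton]
      ext i j
      fin_cases i <;> fin_cases j <;>
        norm_num +decide [Aeff, MMe0, MMe1, MMe2, MMe3, MMe4, dMat, BM, CM, Matrix.one_apply, Matrix.single]
    · have hX : X = {0, 1} := by ext a; fin_cases a <;> simp [h0, h1, h2]
      refine ⟨{2, 3, 4}, ?_⟩
      rw [hX, Finset.sum_insert (by decide), Finset.sum_singleton,
        Finset.sum_insert (by decide), Finset.sum_insert (by decide), Finset.sum_singleton]
      ext i j
      fin_cases i <;> fin_cases j <;>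
        norm_num +decide [Aeff, MMe0, MMe1, MMe2, MMe3, MMe4, dMat, BM, CM, Matrix.one_apply, Matrix.single]
    · have hX : X = {0, 2} := by ext a; fin_cases a <;> simp [h0, h1, h2]
      refine ⟨{1, 3, 4}, ?_⟩
      rw [hX, Finset.sum_insert (by decide), Finset.sum_singleton,
        Finset.sum_insert (by decide), Finset.sum_insert (by decide), Finset.sum_singleton]
      ext i j
      fin_cases i <;> fin_cases j <;>
        norm_num +decide [Aeff, MMe0, MMe1, MMe2, MMe3, MMe4, dMat, BM, CM, Matrix.one_apply, Matrix.single]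
    · have hX : X = {0} := by ext a; fin_cases a <;> simp [h0, h1, h2]
      refine ⟨{1, 2}, ?_⟩
      rw [hX, Finset.sum_singleton, Finset.sum_insert (by decide), Finset.sum_singleton]
      ext i j
      fin_cases i <;> fin_cases j <;>
        norm_num +decide [Aeff, MMe0, MMe1, MMe2, MMe3, MMe4, dMat, BM, CM, Matrix.one_apply, Matrix.single]
    · have hX : X = {1, 2} := by ext a; fin_cases a <;> simp [h0, h1, h2]
      refine ⟨{0, 3, 4}, ?_⟩
      rw [hX, Finset.sum_insert (by decide), Finset.sum_singleton,
        Finset.sum_insert (by decide), Finset.sum_insert (by decide), Finset.sum_singleton]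
      ext i j
      fin_cases i <;> fin_cases j <;>
        norm_num +decide [Aeff, MMe0, MMe1, MMe2, MMe3, MMe4, dMat, BM, CM, Matrix.one_apply, Matrix.single]
    · have hX : X = {1} := by ext a; fin_cases a <;> simp [h0, h1, h2]
      refine ⟨{0, 2}, ?_⟩
      rw [hX, Finset.sum_singleton, Finset.sum_insert (by decide), Finset.sum_singleton]
      ext i j
      fin_cases i <;> fin_cases j <;>
        norm_num +decide [Aeff, MMe0, MMe1, MMe2, MMe3, MMe4, dMat, BM, CM, Matrix.one_apply, Matrix.single]
    · have hX : X = {2} := by ext a; fin_cases a <;> simp [h0, h1, h2]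
      refine ⟨{0, 1}, ?_⟩
      rw [hX, Finset.sum_singleton, Finset.sum_insert (by decide), Finset.sum_singleton]
      ext i j
      fin_cases i <;> fin_cases j <;>
        norm_num +decide [Aeff, MMe0, MMe1, MMe2, MMe3, MMe4, dMat, BM, CM, Matrix.one_apply, Matrix.single]
    · have hX : X = ∅ := by ext a; fin_cases a <;> simp [h0, h1, h2]
      exact ⟨∅, by rw [hX]; simp⟩
  · intro Y
    by_cases h0 : (0 : Fin 2) ∈ Y <;> by_cases h1 : (1 : Fin 2) ∈ Y
    · have hY : Y = {0, 1} := by ext a; fin_cases a <;> simp [h0, h1]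
      refine ⟨{0, 1, 2, 3, 4}, ?_⟩
      rw [hY, Finset.sum_insert (by decide), Finset.sum_singleton,
        Finset.sum_insert (by decide), Finset.sum_insert (by decide),
        Finset.sum_insert (by decide), Finset.sum_insert (by decide), Finset.sum_singleton]
      show Beff + (1 - Beff) = _
      rw [hBeffBM]
      ext i j
      fin_cases i <;> fin_cases j <;>
        norm_num +decide [MMe0, MMe1, MMe2, MMe3, MMe4, dMat, BM, CM, Matrix.one_apply]
    · have hY : Y = {0} := by ext a; fin_cases a <;> simp [h0, h1]
      refine ⟨{3}, ?_⟩
      rw [hY, Finset.sum_singleton, Finset.sum_singleton]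
      show Beff = MM 3
      rw [hBeffBM]; rfl
    · have hY : Y = {1} := by ext a; fin_cases a <;> simp [h0, h1]
      refine ⟨{0, 1, 2, 4}, ?_⟩
      rw [hY, Finset.sum_singleton, Finset.sum_insert (by decide),
        Finset.sum_insert (by decide), Finset.sum_insert (by decide), Finset.sum_singleton]
      show (1 : Matrix (Fin 3) (Fin 3) ℂ) - Beff = _
      rw [hBeffBM]
      ext i j
      fin_cases i <;> fin_cases j <;>
        norm_num +decide [MMe0, MMe1, MMe2, MMe3, MMe4, dMat, BM, CM, Matrix.one_apply]
    · have hY : Y = ∅ := by ext a; fin_cases a <;> simp [h0, h1]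
      exact ⟨∅, by rw [hY]; simp⟩

set_option maxHeartbeats 2000000 in
lemma notjm_part : ¬ JointlyMeasurable Aeff ![Beff, 1 - Beff] := by
  rintro ⟨J, hP, hA, hB⟩
  -- entries of the first margin
  have hB1 : ∑ k, J k 0 = Beff := by simpa using hB 0
  have hsum : ∀ i j : Fin 3, (J 0 0) i j + (J 1 0) i j + (J 2 0) i j = 1/6 := by
    intro i j
    have h := congrFun (congrFun hB1 i) j
    rw [hBeffBM] at h
    simpa [Fin.sum_univ_three, Matrix.sum_apply, BM] using h
  -- diagonal entries (J k 0) k k vanish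
  have hdiag : ∀ k : Fin 3, (J k 0) k k = 0 := by
    intro k
    have hAk : J k 0 + J k 1 = Aeff k := by
      have := hA k; rwa [Fin.sum_univ_two] at this
    have h3 : (J k 0) k k + (J k 1) k k = 0 := by
      have h := congrFun (congrFun hAk k) k
      rw [Matrix.add_apply] at h
      rw [h]
      fin_cases k <;> simp [Aeff, Matrix.single, Matrix.one_apply]
    have h1 := aux_diag_nonneg (hP k 0) k
    have h2 := aux_diag_nonneg (hP k 1) k
    refine le_antisymm ?_ h1
    rw [eq_neg_of_add_eq_zero_left h3]
    exact neg_nonpos.mpr h2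
  have hrow0 := aux_row_eq_zero (hP 0 0) 0 (hdiag 0)
  have hrow1 := aux_row_eq_zero (hP 1 0) 1 (hdiag 1)
  have hrow2 := aux_row_eq_zero (hP 2 0) 2 (hdiag 2)
  -- off-diagonal entries forced by the margin
  have e02 : (J 1 0) 0 2 = 1/6 := by
    have h := hsum 0 2
    rw [(hrow0 2).1, (hrow2 0).2] at h
    linear_combination h
  have e01 : (J 2 0) 0 1 = 1/6 := by
    have h := hsum 0 1
    rw [(hrow0 1).1, (hrow1 0).2] at h
    linear_combination h
  -- realification of relevant diagonal entries
  have haM := aux_diag_nonneg (hP 2 0) 0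
  have hbM := aux_diag_nonneg (hP 2 0) 1
  have ha'M := aux_diag_nonneg (hP 1 0) 0
  have hb'M := aux_diag_nonneg (hP 0 0) 1
  set a : ℝ := ((J 2 0) 0 0).re with ha_def
  set b : ℝ := ((J 2 0) 1 1).re with hb_def
  set a' : ℝ := ((J 1 0) 0 0).re with ha'_def
  set b' : ℝ := ((J 0 0) 1 1).re with hb'_def
  have hMa : (J 2 0) 0 0 = (a : ℂ) := aux_eq_re haM
  have hMb : (J 2 0) 1 1 = (b : ℂ) := aux_eq_re hbM
  have hMa' : (J 1 0) 0 0 = (a' : ℂ) := aux_eq_re ha'M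
  have hMb' : (J 0 0) 1 1 = (b' : ℂ) := aux_eq_re hb'M
  have ha0 : 0 ≤ a := (Complex.nonneg_iff.mp haM).1
  have hb0 : 0 ≤ b := (Complex.nonneg_iff.mp hbM).1
  have ha'0 : 0 ≤ a' := (Complex.nonneg_iff.mp ha'M).1
  have hb'0 : 0 ≤ b' := (Complex.nonneg_iff.mp hb'M).1
  -- diagonal sum constraints
  have d00 : a' + a = 1/6 := by
    have h := hsum 0 0
    rw [(hrow0 0).1, hMa, hMa'] at h
    have h' : ((a' + a : ℝ) : ℂ) = ((1/6 : ℝ) : ℂ) := by push_cast; linear_combination h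
    exact_mod_cast h'
  have d11 : b' + b = 1/6 := by
    have h := hsum 1 1
    rw [hdiag 1, hMb, hMb'] at h
    have h' : ((b' + b : ℝ) : ℂ) = ((1/6 : ℝ) : ℂ) := by push_cast; linear_combination h
    exact_mod_cast h'
  -- the Hermitian partner entry
  have e10 : (J 2 0) 1 0 = 1/6 := by
    have h := congrFun (congrFun (hP 2 0).1 1) 0
    rw [Matrix.conjTranspose_apply, e01] at h
    rw [← h]
    norm_num
  -- the 2×2 minor inequality for J 2 0
  have hq := (hP 2 0).dotProduct_mulVec_nonneg ![(b : ℂ), -(1/6 : ℂ), 0]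
  have key : star (![(b : ℂ), -(1/6 : ℂ), 0]) ⬝ᵥ (J 2 0) *ᵥ ![(b : ℂ), -(1/6 : ℂ), 0]
      = ((b * (a * b - 1/36) : ℝ) : ℂ) := by
    simp [dotProduct, Matrix.mulVec, Fin.sum_univ_three, hMa, hMb, e01, e10]
    push_cast
    ring
  rw [key] at hq
  have hreal : 0 ≤ b * (a * b - 1/36) := Complex.zero_le_real.mp hq
  -- b ≠ 0
  have hbne : b ≠ 0 := by
    intro hb
    have : (J 2 0) 1 1 = 0 := by rw [hMb, hb]; norm_num
    have := (aux_row_eq_zero (hP 2 0) 1 this 0).1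
    rw [e10] at this
    norm_num at this
  have hbpos : 0 < b := lt_of_le_of_ne hb0 (Ne.symm hbne)
  -- conclude a' = 0
  have ha'z : a' = 0 := by
    have ha'le : a' ≤ 0 := by
      nlinarith [hreal, mul_pos hbpos hbpos, mul_nonneg hb'0 hbpos.le]
    exact le_antisymm ha'le ha'0
  have hJ10 : (J 1 0) 0 0 = 0 := by rw [hMa', ha'z]; norm_num
  have := (aux_row_eq_zero (hP 1 0) 0 hJ10 2).1
  rw [e02] at this
  norm_num at this

/-- The POVMs `A = (A_1, A_2, A_3)` and `B = (B_1, 1 - B_1)` on `ℂ³` are coexistent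
but not jointly measurable. -/
theorem coexistent_not_jointlyMeasurable :
    Coexistent Aeff ![Beff, 1 - Beff] ∧ ¬ JointlyMeasurable Aeff ![Beff, 1 - Beff] :=
  ⟨coex_part, notjm_part⟩
end

section
/- Let A = (A_1, 1 − A_1) and B = (B_1, 1 − B_1) be two 2-outcome POVMs on ℂ^d. Then A and B are coexistent if and only if they are jointly measurable. -/
open Matrix Finset
open scoped ComplexOrder

private lemma posSemidef_sum {d N : ℕ} (M : Fin N → Matrix (Fin d) (Fin d) ℂ)
    (hM : ∀ l, (M l).PosSemidef) (s : Finset (Fin N)) :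
    (∑ l ∈ s, M l).PosSemidef := by
  classical
  induction s using Finset.induction with
  | empty => simpa using Matrix.PosSemidef.zero
  | @insert a s h ih =>
    rw [Finset.sum_insert h]
    exact (hM _).add ih

/-- Two 2-outcome POVMs are coexistent if and only if they are jointly measurable. -/
theorem coexistent_iff_jointlyMeasurable_of_two_outcomes {d : ℕ}
    (A1 B1 : Matrix (Fin d) (Fin d) ℂ) (hA : IsEffect A1) (hB : IsEffect B1) :
    Coexistent ![A1, 1 - A1] ![B1, 1 - B1] ↔
      JointlyMeasurable ![A1, 1 - A1] ![B1, 1 - B1] := by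
  classical
  constructor
  · rintro ⟨N, M, ⟨hMeff, hMsum⟩, hAr, hBr⟩
    obtain ⟨ZA, hZA⟩ := hAr {0}
    obtain ⟨ZB, hZB⟩ := hBr {0}
    simp only [Finset.sum_singleton, Matrix.cons_val_zero] at hZA hZB
    have hPSD : ∀ l, (M l).PosSemidef := fun l => (hMeff l).1
    have hcompl : ∀ s : Finset (Fin N), ∑ l ∈ sᶜ, M l = 1 - ∑ l ∈ s, M l := by
      intro s
      have := Finset.sum_add_sum_compl s M
      rw [hMsum] at this
      rw [← this]; abel
    refine ⟨![![∑ l ∈ ZA ∩ ZB, M l, ∑ l ∈ ZA \ ZB, M l],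
             ![∑ l ∈ ZB \ ZA, M l, ∑ l ∈ (ZA ∪ ZB)ᶜ, M l]], ?_, ?_, ?_⟩
    · intro k j
      fin_cases k <;> fin_cases j <;>
        simpa using posSemidef_sum M hPSD _
    · intro k
      fin_cases k
      · simpa [Fin.sum_univ_two] using
          (Finset.sum_inter_add_sum_sdiff ZA ZB M).trans hZA.symm
      · have hu : (ZB \ ZA) ∪ (ZA ∪ ZB)ᶜ = ZAᶜ := by
          ext l; simp [Finset.mem_union, Finset.mem_sdiff, Finset.mem_compl]; tauto
        have hd : Disjoint (ZB \ ZA) ((ZA ∪ ZB)ᶜ) := by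
          rw [Finset.disjoint_left]
          intro a ha hb
          simp only [Finset.mem_sdiff] at ha
          simp only [Finset.mem_compl, Finset.mem_union] at hb
          exact hb (Or.inr ha.1)
        have := Finset.sum_union hd (f := M)
        rw [hu, hcompl, ← hZA] at this
        simpa [Fin.sum_univ_two] using this.symm
    · intro j
      fin_cases j
      · have : ZA ∩ ZB = ZB ∩ ZA := Finset.inter_comm _ _
        simpa [Fin.sum_univ_two, this] using
          (Finset.sum_inter_add_sum_sdiff ZB ZA M).trans hZB.symm
      · have hu : (ZA \ ZB) ∪ (ZA ∪ ZB)ᶜ = ZBᶜ := by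
          ext l; simp [Finset.mem_union, Finset.mem_sdiff, Finset.mem_compl]; tauto
        have hd : Disjoint (ZA \ ZB) ((ZA ∪ ZB)ᶜ) := by
          rw [Finset.disjoint_left]
          intro a ha hb
          simp only [Finset.mem_sdiff] at ha
          simp only [Finset.mem_compl, Finset.mem_union] at hb
          exact hb (Or.inl ha.1)
        have := Finset.sum_union hd (f := M)
        rw [hu, hcompl, ← hZB] at this
        simpa [Fin.sum_univ_two] using this.symm
  · rintro ⟨J, hJpsd, hJrow, hJcol⟩
    have h00 : J 0 0 + J 0 1 = A1 := by simpa [Fin.sum_univ_two] using hJrow 0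
    have h10 : J 1 0 + J 1 1 = 1 - A1 := by simpa [Fin.sum_univ_two] using hJrow 1
    have hc0 : J 0 0 + J 1 0 = B1 := by simpa [Fin.sum_univ_two] using hJcol 0
    have hc1 : J 0 1 + J 1 1 = 1 - B1 := by simpa [Fin.sum_univ_two] using hJcol 1
    set M : Fin 4 → Matrix (Fin d) (Fin d) ℂ := ![J 0 0, J 0 1, J 1 0, J 1 1] with hMdef
    have hMsum : ∑ l, M l = 1 := by
      have : J 0 0 + J 0 1 + (J 1 0 + J 1 1) = 1 := by rw [h00, h10]; abel
      simpa [hMdef, Fin.sum_univ_four, add_assoc] using this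
    refine ⟨4, M, ⟨?_, hMsum⟩, ?_, ?_⟩
    · intro l
      constructor
      · fin_cases l <;> simpa [hMdef] using hJpsd _ _
      · have key : ∀ l : Fin 4, (1 : Matrix (Fin d) (Fin d) ℂ) - M l
            = ∑ l' ∈ {l}ᶜ, M l' := by
          intro l'
          have := Finset.sum_add_sum_compl ({l'} : Finset (Fin 4)) M
          rw [hMsum, Finset.sum_singleton] at this
          rw [← this]; abel
        rw [key]
        exact posSemidef_sum M (fun l' => by fin_cases l' <;> simpa [hMdef] using hJpsd _ _) _
    · intro X
      by_cases h0 : (0 : Fin 2) ∈ X <;> by_cases h1 : (1 : Fin 2) ∈ X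
      · have hX : X = {0, 1} := by
          ext x; fin_cases x <;> simp [h0, h1]
        refine ⟨Finset.univ, ?_⟩
        rw [hX, hMsum]
        rw [show ({0, 1} : Finset (Fin 2)) = Finset.univ by decide]
        simp [Fin.sum_univ_two]
      · have hX : X = {0} := by ext x; fin_cases x <;> simp [h0, h1]
        refine ⟨{0, 1}, ?_⟩
        rw [hX, Finset.sum_singleton, Finset.sum_pair (by decide)]
        simp [hMdef, ← h00]
      · have hX : X = {1} := by ext x; fin_cases x <;> simp [h0, h1]
        refine ⟨{2, 3}, ?_⟩
        rw [hX, Finset.sum_singleton, Finset.sum_pair (by decide)]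
        simp [hMdef, ← h10]
      · have hX : X = ∅ := by ext x; fin_cases x <;> simp [h0, h1]
        exact ⟨∅, by simp [hX]⟩
    · intro Y
      by_cases h0 : (0 : Fin 2) ∈ Y <;> by_cases h1 : (1 : Fin 2) ∈ Y
      · have hY : Y = {0, 1} := by ext x; fin_cases x <;> simp [h0, h1]
        refine ⟨Finset.univ, ?_⟩
        rw [hY, hMsum]
        rw [show ({0, 1} : Finset (Fin 2)) = Finset.univ by decide]
        simp [Fin.sum_univ_two]
      · have hY : Y = {0} := by ext x; fin_cases x <;> simp [h0, h1]
        refine ⟨{0, 2}, ?_⟩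
        rw [hY, Finset.sum_singleton, Finset.sum_pair (by decide)]
        simp [hMdef, ← hc0]
      · have hY : Y = {1} := by ext x; fin_cases x <;> simp [h0, h1]
        refine ⟨{1, 3}, ?_⟩
        rw [hY, Finset.sum_singleton, Finset.sum_pair (by decide)]
        simp [hMdef, ← hc1]
      · have hY : Y = ∅ := by ext x; fin_cases x <;> simp [h0, h1]
        exact ⟨∅, by simp [hY]⟩
end

section
/- Let A be an n-outcome POVM and B an m-outcome POVM on ℂ^d such that A_k − (1/(2n))·1 is positive semidefinite for every k and B_j − (1/(2m))·1 is positive semidefinite for every j. Then A and B are jointly measurable. -/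
open Matrix Finset
open scoped ComplexOrder

lemma psd_real_smul {d : ℕ} {M : Matrix (Fin d) (Fin d) ℂ} (hM : M.PosSemidef)
    {c : ℝ} (hc : 0 ≤ c) : ((c : ℂ) • M).PosSemidef := by
  refine Matrix.PosSemidef.of_dotProduct_mulVec_nonneg ?_ ?_
  · unfold Matrix.IsHermitian
    rw [conjTranspose_smul, hM.1.eq]
    simp
  · intro x
    rw [smul_mulVec, dotProduct_smul]
    exact mul_nonneg (by exact_mod_cast hc) (hM.dotProduct_mulVec_nonneg x)

/-- If all effects of the POVM `A` dominate `1/(2n)` times the identity and all effects of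
`B` dominate `1/(2m)` times the identity, then `A` and `B` are jointly measurable. -/
theorem jointlyMeasurable_of_effects_dominate {d n m : ℕ}
    (A : Fin n → Matrix (Fin d) (Fin d) ℂ) (B : Fin m → Matrix (Fin d) (Fin d) ℂ)
    (hA : IsPOVM A) (hB : IsPOVM B)
    (hAbig : ∀ k, (A k - ((1 / (2 * (n : ℝ)) : ℝ) : ℂ) • 1).PosSemidef)
    (hBbig : ∀ j, (B j - ((1 / (2 * (m : ℝ)) : ℝ) : ℂ) • 1).PosSemidef) :
    JointlyMeasurable A B := by
  rcases Nat.eq_zero_or_pos d with hd | hd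
  · subst hd
    exact ⟨fun _ _ => 0, fun _ _ => Matrix.PosSemidef.zero, fun k => by ext i; exact i.elim0,
      fun j => by ext i; exact i.elim0⟩
  have hnt : Nontrivial (Matrix (Fin d) (Fin d) ℂ) := by
    have : Nonempty (Fin d) := ⟨⟨0, hd⟩⟩
    infer_instance
  have hn : 0 < n := by
    rcases Nat.eq_zero_or_pos n with h | h
    · exfalso; subst h
      have := hA.2
      simp only [Finset.univ_eq_empty, Finset.sum_empty] at this
      exact zero_ne_one this
    · exact h
  have hm : 0 < m := by
    rcases Nat.eq_zero_or_pos m with h | h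
    · exfalso; subst h
      have := hB.2
      simp only [Finset.univ_eq_empty, Finset.sum_empty] at this
      exact zero_ne_one this
    · exact h
  refine ⟨fun k j => ((1 / (m : ℝ) : ℝ) : ℂ) • (A k - ((1 / (2 * (n : ℝ)) : ℝ) : ℂ) • 1)
      + ((1 / (n : ℝ) : ℝ) : ℂ) • (B j - ((1 / (2 * (m : ℝ)) : ℝ) : ℂ) • 1), ?_, ?_, ?_⟩
  · intro k j
    exact (psd_real_smul (hAbig k) (by positivity)).add (psd_real_smul (hBbig j) (by positivity))
  · intro k
    rw [Finset.sum_add_distrib, Finset.sum_const, ← Finset.smul_sum, Finset.sum_sub_distrib,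
      hB.2, Finset.sum_const]
    have hmne : (m : ℂ) ≠ 0 := by exact_mod_cast hm.ne'
    have hnne : (n : ℂ) ≠ 0 := by exact_mod_cast hn.ne'
    rw [← Nat.cast_smul_eq_nsmul ℂ, ← Nat.cast_smul_eq_nsmul ℂ, Finset.card_univ, Fintype.card_fin]
    match_scalars <;> field_simp <;> ring
  · intro j
    rw [Finset.sum_add_distrib, Finset.sum_const, ← Finset.smul_sum, Finset.sum_sub_distrib,
      hA.2, Finset.sum_const]
    have hmne : (m : ℂ) ≠ 0 := by exact_mod_cast hm.ne'
    have hnne : (n : ℂ) ≠ 0 := by exact_mod_cast hn.ne'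
    rw [← Nat.cast_smul_eq_nsmul ℂ, ← Nat.cast_smul_eq_nsmul ℂ, Finset.card_univ, Fintype.card_fin]
    match_scalars <;> field_simp <;> ring
end

section
/- The set of jointly measurable pairs has nonempty interior: for every d, n, m there exists ε > 0 such that whenever A is an n-outcome POVM and B an m-outcome POVM on ℂ^d with ‖A_k − (1/n)·1‖ < ε for all k and ‖B_j − (1/m)·1‖ < ε for all j (operator norm), the pair (A, B) is jointly measurable. In particular, the pair (I_n, I_m) of uniformly random observables, where I_n = (1/n·1, …, 1/n·1), has a neighborhood consisting of jointly measurable pairs. -/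
open Matrix Finset
open scoped ComplexOrder

open scoped Matrix.Norms.L2Operator

private lemma herm_quad_star {d : ℕ} {M : Matrix (Fin d) (Fin d) ℂ} (hM : M.IsHermitian)
    (x : Fin d → ℂ) : star (star x ⬝ᵥ M.mulVec x) = star x ⬝ᵥ M.mulVec x := by
  nth_rewrite 1 [Matrix.star_dotProduct]
  rw [star_star, Matrix.star_mulVec, ← Matrix.dotProduct_mulVec, hM.eq]

private lemma posSemidef_smul_one_add {d : ℕ} {X : Matrix (Fin d) (Fin d) ℂ}
    (hX : X.IsHermitian) {c : ℝ} (hc : ‖X‖ ≤ c) :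
    (((c : ℝ) : ℂ) • 1 + X).PosSemidef := by
  have hJ : (((c : ℝ) : ℂ) • (1 : Matrix (Fin d) (Fin d) ℂ) + X).IsHermitian := by
    simp [Matrix.IsHermitian, Matrix.conjTranspose_add, Matrix.conjTranspose_smul,
      hX.eq, Complex.star_def, Complex.conj_ofReal]
  refine Matrix.PosSemidef.of_dotProduct_mulVec_nonneg hJ fun x => ?_
  have hz : star x ⬝ᵥ ((((c : ℝ) : ℂ) • 1 + X) *ᵥ x)
      = ((c : ℝ) : ℂ) * (star x ⬝ᵥ x) + star x ⬝ᵥ X *ᵥ x := by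
    rw [Matrix.add_mulVec, Matrix.smul_mulVec, Matrix.one_mulVec,
      dotProduct_add, dotProduct_smul, smul_eq_mul]
  set y : EuclideanSpace ℂ (Fin d) := (WithLp.equiv 2 (Fin d → ℂ)).symm x with hy
  have h1 : star x ⬝ᵥ x = ((‖y‖ : ℂ)) ^ 2 := by
    have := inner_self_eq_norm_sq_to_K (𝕜 := ℂ) y
    exact (dotProduct_comm _ _).trans this
  have h2 : ‖star x ⬝ᵥ X *ᵥ x‖ ≤ ‖X‖ * ‖y‖ ^ 2 := by
    have e : star x ⬝ᵥ X *ᵥ x = inner ℂ y ((WithLp.equiv 2 (Fin d → ℂ)).symm (X *ᵥ x)) :=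
      dotProduct_comm _ _
    rw [e]
    calc ‖(inner ℂ y ((WithLp.equiv 2 (Fin d → ℂ)).symm (X *ᵥ x)) : ℂ)‖
        ≤ ‖y‖ * ‖(WithLp.equiv 2 (Fin d → ℂ)).symm (X *ᵥ x)‖ := norm_inner_le_norm _ _
      _ ≤ ‖y‖ * (‖X‖ * ‖y‖) := by
          refine mul_le_mul_of_nonneg_left ?_ (norm_nonneg _)
          exact X.l2_opNorm_mulVec y
      _ = ‖X‖ * ‖y‖ ^ 2 := by ring
  have him : (star x ⬝ᵥ X *ᵥ x).im = 0 := by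
    have := herm_quad_star hX x
    rw [Complex.star_def, Complex.conj_eq_iff_im] at this
    exact this
  have hre : -(‖X‖ * ‖y‖ ^ 2) ≤ (star x ⬝ᵥ X *ᵥ x).re := by
    have := (Complex.abs_re_le_norm (star x ⬝ᵥ X *ᵥ x))
    have h3 := neg_abs_le (star x ⬝ᵥ X *ᵥ x).re
    nlinarith [h2]
  rw [hz, h1]
  rw [Complex.le_def]
  constructor
  · simp only [Complex.add_re, Complex.mul_re, Complex.ofReal_re, Complex.ofReal_im,
      Complex.zero_re]
    have hpow : (((‖y‖ : ℂ)) ^ 2).re = ‖y‖ ^ 2 := by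
      norm_cast
    have hpowim : (((‖y‖ : ℂ)) ^ 2).im = 0 := by
      norm_cast
    rw [hpow, hpowim]
    nlinarith [sq_nonneg ‖y‖, norm_nonneg X]
  · simp only [Complex.add_im, Complex.mul_im, Complex.ofReal_re, Complex.ofReal_im,
      Complex.zero_im, him]
    have hpowim : (((‖y‖ : ℂ)) ^ 2).im = 0 := by norm_cast
    rw [hpowim]
    ring


/-- Every pair of POVMs close enough (in operator norm) to the pair of uniformly random
observables `(I_n, I_m)` is jointly measurable. -/
theorem jointlyMeasurable_near_uniform (d n m : ℕ) :
    ∃ ε > (0 : ℝ), ∀ (A : Fin n → Matrix (Fin d) (Fin d) ℂ)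
      (B : Fin m → Matrix (Fin d) (Fin d) ℂ), IsPOVM A → IsPOVM B →
      (∀ k, ‖A k - ((1 / (n : ℝ) : ℝ) : ℂ) • 1‖ < ε) →
      (∀ j, ‖B j - ((1 / (m : ℝ) : ℝ) : ℂ) • 1‖ < ε) →
      JointlyMeasurable A B := by
  refine ⟨1 / ((n : ℝ) + m + 1), by positivity, ?_⟩
  intro A B hA hB hAε hBε
  -- trivial case d = 0
  rcases Nat.eq_zero_or_pos d with hd | hd
  · subst hd
    refine ⟨fun _ _ => 0, fun _ _ => Matrix.PosSemidef.zero, fun k => ?_, fun j => ?_⟩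
    · exact Subsingleton.elim _ _
    · exact Subsingleton.elim _ _
  -- degenerate cases n = 0 or m = 0 contradict the POVM condition
  have hone : (1 : Matrix (Fin d) (Fin d) ℂ) ≠ 0 := by
    intro h
    have := congrFun (congrFun h ⟨0, hd⟩) ⟨0, hd⟩
    simp [Matrix.one_apply] at this
  rcases Nat.eq_zero_or_pos n with hn | hn
  · exfalso
    have h2 := hA.2
    subst hn
    simp at h2
    exact hone h2.symm
  rcases Nat.eq_zero_or_pos m with hm | hm
  · exfalso
    have h2 := hB.2
    subst hm
    simp at h2
    exact hone h2.symm
  -- main case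
  have hn' : (n : ℂ) ≠ 0 := Nat.cast_ne_zero.mpr hn.ne'
  have hm' : (m : ℂ) ≠ 0 := Nat.cast_ne_zero.mpr hm.ne'
  set a : ℝ := 1 / (n : ℝ) with ha
  set b : ℝ := 1 / (m : ℝ) with hb
  set c : ℝ := 1 / ((n : ℝ) * m) with hc
  set X : Fin n → Fin m → Matrix (Fin d) (Fin d) ℂ := fun k j =>
    ((b : ℂ)) • (A k - (a : ℂ) • 1) + ((a : ℂ)) • (B j - (b : ℂ) • 1) with hX
  refine ⟨fun k j => ((c : ℂ)) • 1 + X k j, ?_, ?_, ?_⟩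
  · intro k j
    apply posSemidef_smul_one_add
    · -- Hermitian
      have hAk := (hA.1 k).1.1
      have hBj := (hB.1 j).1.1
      simp only [hX, Matrix.IsHermitian, Matrix.conjTranspose_add, Matrix.conjTranspose_smul,
        Matrix.conjTranspose_sub, Matrix.conjTranspose_one, hAk.eq, hBj.eq,
        Complex.star_def, Complex.conj_ofReal]
    · -- norm bound
      have hna : (0:ℝ) < a := by positivity
      have hnb : (0:ℝ) < b := by positivity
      have hε : (0:ℝ) < 1 / ((n : ℝ) + m + 1) := by positivity
      calc ‖X k j‖ ≤ ‖((b : ℂ)) • (A k - (a : ℂ) • 1)‖ + ‖((a : ℂ)) • (B j - (b : ℂ) • 1)‖ :=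
            norm_add_le _ _
        _ = b * ‖A k - (a : ℂ) • 1‖ + a * ‖B j - (b : ℂ) • 1‖ := by
            rw [norm_smul, norm_smul, Complex.norm_real, Complex.norm_real,
              Real.norm_eq_abs, Real.norm_eq_abs, abs_of_pos hnb, abs_of_pos hna]
        _ ≤ b * (1 / ((n : ℝ) + m + 1)) + a * (1 / ((n : ℝ) + m + 1)) := by
            have h1 := (hAε k).le
            have h2 := (hBε j).le
            rw [ha, hb] at *
            gcongr
        _ ≤ c := by
            rw [ha, hb, hc]
            have hn0 : (0:ℝ) < n := Nat.cast_pos.mpr hn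
            have hm0 : (0:ℝ) < m := Nat.cast_pos.mpr hm
            rw [div_mul_div_comm, div_mul_div_comm,
              div_add_div _ _ (by positivity) (by positivity),
              div_le_div_iff₀ (by positivity) (by positivity)]
            nlinarith [mul_pos (mul_pos hn0 hm0) (by positivity : (0:ℝ) < (n:ℝ) + m + 1)]
  · intro k
    have e2 : (m:ℂ) * ((b:ℝ):ℂ) = 1 := by rw [hb]; push_cast; field_simp
    have e1 : (m:ℂ) * ((c:ℝ):ℂ) = ((a:ℝ):ℂ) := by
      rw [ha, hc]; push_cast; field_simp
    simp only [hX]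
    rw [Finset.sum_add_distrib, Finset.sum_add_distrib, Finset.sum_const, Finset.card_univ,
      Fintype.card_fin, Finset.sum_const, Finset.card_univ, Fintype.card_fin,
      ← Finset.smul_sum, Finset.sum_sub_distrib, hB.2, Finset.sum_const, Finset.card_univ,
      Fintype.card_fin]
    rw [← Nat.cast_smul_eq_nsmul ℂ m (((c:ℝ):ℂ) • (1 : Matrix (Fin d) (Fin d) ℂ)),
      ← Nat.cast_smul_eq_nsmul ℂ m (((b:ℝ):ℂ) • (A k - ((a:ℝ):ℂ) • 1)),
      ← Nat.cast_smul_eq_nsmul ℂ m (((b:ℝ):ℂ) • (1 : Matrix (Fin d) (Fin d) ℂ))]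
    rw [smul_smul, smul_smul, smul_smul, e1, e2]
    module
  · intro j
    have e2 : (n:ℂ) * ((a:ℝ):ℂ) = 1 := by rw [ha]; push_cast; field_simp
    have e1 : (n:ℂ) * ((c:ℝ):ℂ) = ((b:ℝ):ℂ) := by
      rw [hb, hc]; push_cast; field_simp
    simp only [hX]
    rw [Finset.sum_add_distrib, Finset.sum_add_distrib, Finset.sum_const, Finset.card_univ,
      Fintype.card_fin, Finset.sum_const, Finset.card_univ, Fintype.card_fin,
      ← Finset.smul_sum, Finset.sum_sub_distrib, hA.2, Finset.sum_const, Finset.card_univ,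
      Fintype.card_fin]
    rw [← Nat.cast_smul_eq_nsmul ℂ n (((c:ℝ):ℂ) • (1 : Matrix (Fin d) (Fin d) ℂ)),
      ← Nat.cast_smul_eq_nsmul ℂ n (((a:ℝ):ℂ) • (B j - ((b:ℝ):ℂ) • 1)),
      ← Nat.cast_smul_eq_nsmul ℂ n (((a:ℝ):ℂ) • (1 : Matrix (Fin d) (Fin d) ℂ))]
    rw [smul_smul, smul_smul, smul_smul, e1, e2]
    module
end

section
/- The set of coexistent pairs of POVMs is convex: if (A, B) and (A', B') are two pairs consisting of an n-outcome POVM and an m-outcome POVM on ℂ^d, each pair coexistent, then for every λ ∈ [0,1] the pair (λA + (1−λ)A', λB + (1−λ)B') — i.e. the POVMs with effects λA_k + (1−λ)A'_k and λB_j + (1−λ)B'_j — is a pair of POVMs and is coexistent. -/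
open Matrix Finset
open scoped ComplexOrder

lemma psd_smul_of_nonneg {d : ℕ} {P : Matrix (Fin d) (Fin d) ℂ}
    (hP : P.PosSemidef) {c : ℝ} (hc : 0 ≤ c) : ((c : ℂ) • P).PosSemidef := by
  refine PosSemidef.of_dotProduct_mulVec_nonneg ?_ (fun x => ?_)
  · unfold Matrix.IsHermitian
    rw [Matrix.conjTranspose_smul, hP.1]
    simp [Complex.conj_ofReal]
  · rw [Matrix.smul_mulVec, dotProduct_smul, smul_eq_mul]
    exact mul_nonneg (by exact_mod_cast hc) (hP.dotProduct_mulVec_nonneg x)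

lemma convex_one {d : ℕ} (lam : ℝ) :
    (lam : ℂ) • (1 : Matrix (Fin d) (Fin d) ℂ) + ((1 - lam : ℝ) : ℂ) • 1 = 1 := by
  rw [← add_smul]
  push_cast
  rw [add_sub_cancel, one_smul]

lemma isEffect_convex {d : ℕ} {lam : ℝ} (hl0 : 0 ≤ lam) (hl1 : lam ≤ 1)
    {P Q : Matrix (Fin d) (Fin d) ℂ} (hP : IsEffect P) (hQ : IsEffect Q) :
    IsEffect ((lam : ℂ) • P + ((1 - lam : ℝ) : ℂ) • Q) := by
  have h1l : (0:ℝ) ≤ 1 - lam := by linarith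
  refine ⟨(psd_smul_of_nonneg hP.1 hl0).add (psd_smul_of_nonneg hQ.1 h1l), ?_⟩
  have key : (1 : Matrix (Fin d) (Fin d) ℂ) - ((lam : ℂ) • P + ((1 - lam : ℝ) : ℂ) • Q)
      = (lam : ℂ) • (1 - P) + ((1 - lam : ℝ) : ℂ) • (1 - Q) := by
    simp only [smul_sub]
    nth_rewrite 1 [← convex_one (d := d) lam]
    abel
  rw [key]
  exact (psd_smul_of_nonneg hP.2 hl0).add (psd_smul_of_nonneg hQ.2 h1l)

def emb1 (N N' : ℕ) : Fin N ↪ Fin (N + N') := ⟨Fin.castAdd N', Fin.castAdd_injective N N'⟩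

def emb2 (N N' : ℕ) : Fin N' ↪ Fin (N + N') :=
  ⟨Fin.natAdd N, fun a b hab => by simpa [Fin.ext_iff] using hab⟩

lemma isEffect_zero {d : ℕ} : IsEffect (0 : Matrix (Fin d) (Fin d) ℂ) :=
  ⟨Matrix.PosSemidef.zero, by simpa using Matrix.PosSemidef.one⟩

/-- The set of coexistent pairs of POVMs is convex. -/
theorem coexistent_convex {d n m : ℕ}
    (A A' : Fin n → Matrix (Fin d) (Fin d) ℂ) (B B' : Fin m → Matrix (Fin d) (Fin d) ℂ)
    (hA : IsPOVM A) (hB : IsPOVM B) (hA' : IsPOVM A') (hB' : IsPOVM B')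
    (h : Coexistent A B) (h' : Coexistent A' B')
    (lam : ℝ) (hl0 : 0 ≤ lam) (hl1 : lam ≤ 1) :
    (IsPOVM (fun k => (lam : ℂ) • A k + ((1 - lam : ℝ) : ℂ) • A' k) ∧
      IsPOVM (fun j => (lam : ℂ) • B j + ((1 - lam : ℝ) : ℂ) • B' j)) ∧
    Coexistent (fun k => (lam : ℂ) • A k + ((1 - lam : ℝ) : ℂ) • A' k)
      (fun j => (lam : ℂ) • B j + ((1 - lam : ℝ) : ℂ) • B' j) := by
  -- convex combination of POVMs is a POVM
  have hpovm : ∀ (p : ℕ) (C C' : Fin p → Matrix (Fin d) (Fin d) ℂ),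
      IsPOVM C → IsPOVM C' →
      IsPOVM (fun k => (lam : ℂ) • C k + ((1 - lam : ℝ) : ℂ) • C' k) := by
    intro p C C' hC hC'
    refine ⟨fun k => isEffect_convex hl0 hl1 (hC.1 k) (hC'.1 k), ?_⟩
    rw [Finset.sum_add_distrib, ← Finset.smul_sum, ← Finset.smul_sum, hC.2, hC'.2,
      convex_one]
  refine ⟨⟨hpovm n A A' hA hA', hpovm m B B' hB hB'⟩, ?_⟩
  obtain ⟨N, M, hM, hMA, hMB⟩ := h
  obtain ⟨N', M', hM', hMA', hMB'⟩ := h'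
  -- the combined POVM on `Fin (N + N')`
  set M'' : Fin (N + N') → Matrix (Fin d) (Fin d) ℂ :=
    Fin.addCases (fun l => (lam : ℂ) • M l) (fun l => ((1 - lam : ℝ) : ℂ) • M' l) with hM''
  have hdisj : ∀ (Z : Finset (Fin N)) (Z' : Finset (Fin N')),
      Disjoint (Z.map (emb1 N N')) (Z'.map (emb2 N N')) := by
    intro Z Z'
    simp only [Finset.disjoint_left, Finset.mem_map, emb1, emb2, Function.Embedding.coeFn_mk]
    rintro x ⟨a, _, rfl⟩ ⟨b, _, hb⟩
    have h1 : (Fin.natAdd N b : Fin (N + N')).val = N + b.val := rfl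
    have h2 : (Fin.castAdd N' a : Fin (N + N')).val = a.val := rfl
    have hb' := Fin.val_eq_of_eq hb
    change (Fin.natAdd N b : Fin (N + N')).val = (Fin.castAdd N' a : Fin (N + N')).val at hb'
    rw [h1, h2] at hb'
    omega
  have hsum : ∀ (Z : Finset (Fin N)) (Z' : Finset (Fin N')),
      ∑ l ∈ Z.map (emb1 N N') ∪ Z'.map (emb2 N N'), M'' l
        = (lam : ℂ) • ∑ l ∈ Z, M l + ((1 - lam : ℝ) : ℂ) • ∑ l ∈ Z', M' l := by
    intro Z Z'
    rw [Finset.sum_union (hdisj Z Z'), Finset.sum_map, Finset.sum_map]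
    simp only [emb1, emb2, Function.Embedding.coeFn_mk, hM'', Fin.addCases_left,
      Fin.addCases_right]
    rw [Finset.smul_sum, Finset.smul_sum]
    exact congrArg _ (Finset.sum_congr rfl fun x _ => Fin.addCases_right x)
  refine ⟨N + N', M'', ?_, ?_, ?_⟩
  · constructor
    · intro i
      refine Fin.addCases (fun l => ?_) (fun l => ?_) i
      · rw [hM'']
        simp only [Fin.addCases_left]
        have := isEffect_convex hl0 hl1 (hM.1 l) (isEffect_zero (d := d))
        simpa using this
      · rw [hM'']
        simp only [Fin.addCases_right]
        have := isEffect_convex hl0 hl1 (isEffect_zero (d := d)) (hM'.1 l)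
        simpa using this
    · rw [Fin.sum_univ_add]
      simp only [hM'', Fin.addCases_left, Fin.addCases_right]
      rw [← Finset.smul_sum, ← Finset.smul_sum, hM.2, hM'.2, convex_one]
  · intro X
    obtain ⟨Z, hZ⟩ := hMA X
    obtain ⟨Z', hZ'⟩ := hMA' X
    refine ⟨Z.map (emb1 N N') ∪ Z'.map (emb2 N N'), ?_⟩
    rw [hsum, ← hZ, ← hZ', Finset.sum_add_distrib, Finset.smul_sum, Finset.smul_sum]
  · intro Y
    obtain ⟨Z, hZ⟩ := hMB Y
    obtain ⟨Z', hZ'⟩ := hMB' Y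
    refine ⟨Z.map (emb1 N N') ∪ Z'.map (emb2 N N'), ?_⟩
    rw [hsum, ← hZ, ← hZ', Finset.sum_add_distrib, Finset.smul_sum, Finset.smul_sum]
end

section
/- Let E be a finite-dimensional real normed vector space, let K ⊆ C ⊆ E with K and C convex, K closed with nonempty interior, and suppose there exists a point x ∈ C with x ∉ K. Then the set difference C \ K has nonempty (topological) interior in E. -/
/-- If `K ⊆ C` are convex sets in a finite-dimensional real normed space, `K` is closed with
nonempty interior, and `C` contains a point outside `K`, then `C \ K` has nonempty interior. -/
theorem nonempty_interior_diff_of_convex {E : Type*} [NormedAddCommGroup E] [NormedSpace ℝ E]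
    [FiniteDimensional ℝ E] (K C : Set E) (hKC : K ⊆ C) (hK : Convex ℝ K) (hC : Convex ℝ C)
    (hKclosed : IsClosed K) (hKint : (interior K).Nonempty)
    (x : E) (hxC : x ∈ C) (hxK : x ∉ K) :
    (interior (C \ K)).Nonempty := by
  obtain ⟨y, hy⟩ := hKint
  have hyC : y ∈ interior C := interior_mono hKC hy
  -- Kᶜ is open and contains x
  obtain ⟨ε, hε, hball⟩ := Metric.isOpen_iff.1 hKclosed.isOpen_compl x hxK
  set t : ℝ := min (1/2) (ε / (‖y - x‖ + 1)) with ht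
  have hnorm : (0:ℝ) < ‖y - x‖ + 1 := by positivity
  have ht0 : 0 < t := lt_min (by norm_num) (div_pos hε hnorm)
  have ht1 : t < 1 := lt_of_le_of_lt (min_le_left _ _) (by norm_num)
  set z : E := t • y + (1 - t) • x with hz
  have hzK : z ∉ K := by
    apply hball
    have : z - x = t • (y - x) := by
      simp [hz, smul_sub, sub_smul]; abel
    rw [Metric.mem_ball, dist_eq_norm, this, norm_smul, Real.norm_eq_abs,
      abs_of_pos ht0]
    calc t * ‖y - x‖ ≤ ε / (‖y - x‖ + 1) * ‖y - x‖ := by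
          apply mul_le_mul_of_nonneg_right (min_le_right _ _) (norm_nonneg _)
      _ < ε := by
          rw [div_mul_eq_mul_div, div_lt_iff₀ hnorm]
          nlinarith [norm_nonneg (y - x)]
  have hzC : z ∈ interior C := by
    apply hC.openSegment_interior_self_subset_interior hyC hxC
    exact ⟨t, 1 - t, ht0, by linarith, by ring, rfl⟩
  refine ⟨z, ?_⟩
  have hopen : IsOpen (interior C ∩ Kᶜ) := isOpen_interior.inter hKclosed.isOpen_compl
  have hsub : interior C ∩ Kᶜ ⊆ C \ K := fun w hw => ⟨interior_subset hw.1, hw.2⟩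
  exact interior_maximal hsub hopen ⟨hzC, hzK⟩
end
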